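/- Let n ≡ 0 (mod 4) and let A and W = [e, Ae, …, A^{n-1}e] be the adjacency matrix and walk matrix of the Dynkin graph D_n. Then over 𝔽₂, the column space of W intersects the kernel of A trivially: Im(W) ∩ Ker(A) = {0}. -/

import Mathlib

open Matrix

/-- Adjacency matrix of the Dynkin graph `D n`. -/
def dynkinAdj (R : Type*) [Zero R] [One R] (n : ℕ) : Matrix (Fin n) (Fin n) R :=
  Matrix.of fun i j =>
    if ((i.val + 1 = j.val ∧ 1 ≤ i.val) ∨ (j.val + 1 = i.val ∧ 1 ≤ j.val))
        ∨ (i.val = 0 ∧ j.val = 2) ∨ (j.val = 0 ∧ i.val = 2) then 1 else 0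

/-- The walk matrix `[e, Ae, …, A^{n-1}e]` of an `n × n` matrix. -/
def walkMatrix {R : Type*} [Semiring R] {n : ℕ} (A : Matrix (Fin n) (Fin n) R) :
    Matrix (Fin n) (Fin n) R :=
  Matrix.of fun i k => ((A ^ (k : ℕ)) *ᵥ (fun _ => 1)) i

namespace Stmt10Aux

variable {n : ℕ}

/-- First kernel vector of the Dynkin adjacency matrix over `ZMod 2`. -/
def k1v (n : ℕ) : Fin n → ZMod 2 := fun i =>
  (if i.val % 2 = 1 then 1 else 0) + (if i.val = 0 then 1 else 0) + (if i.val = 1 then 1 else 0)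

/-- Second kernel vector of the Dynkin adjacency matrix over `ZMod 2`. -/
def k2v (n : ℕ) : Fin n → ZMod 2 := fun i => if i.val % 2 = 1 then 1 else 0

lemma k1v_apply (m : ℕ) (hm : m < n) :
    k1v n ⟨m, hm⟩
      = (if m % 2 = 1 then 1 else 0) + (if m = 0 then 1 else 0) + (if m = 1 then 1 else 0) := rfl

lemma k2v_apply (m : ℕ) (hm : m < n) :
    k2v n ⟨m, hm⟩ = if m % 2 = 1 then 1 else 0 := rfl

lemma sum_ite_single (b : Fin n) (x : Fin n → ZMod 2) (P : Fin n → Prop) [DecidablePred P]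
    (h : ∀ j, P j ↔ j = b) :
    (∑ j : Fin n, if P j then x j else 0) = x b := by
  rw [Finset.sum_congr rfl (fun j _ => if_congr (h j) rfl rfl)]
  simp

lemma sum_ite_pair (a b : Fin n) (hab : a ≠ b) (x : Fin n → ZMod 2) (P : Fin n → Prop)
    [DecidablePred P] (h : ∀ j, P j ↔ j = a ∨ j = b) :
    (∑ j : Fin n, if P j then x j else 0) = x a + x b := by
  have hpt : ∀ j : Fin n, (if P j then x j else 0)
      = (if j = a then x j else 0) + (if j = b then x j else 0) := by
    intro j
    by_cases h1 : j = a <;> by_cases h2 : j = b <;>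
      simp_all [h]
  rw [Finset.sum_congr rfl (fun j _ => hpt j), Finset.sum_add_distrib]
  simp

lemma sum_ite_triple (a b c : Fin n) (hab : a ≠ b) (hac : a ≠ c) (hbc : b ≠ c)
    (x : Fin n → ZMod 2) (P : Fin n → Prop)
    [DecidablePred P] (h : ∀ j, P j ↔ j = a ∨ j = b ∨ j = c) :
    (∑ j : Fin n, if P j then x j else 0) = x a + x b + x c := by
  have hpt : ∀ j : Fin n, (if P j then x j else 0)
      = (if j = a then x j else 0) + ((if j = b then x j else 0) + (if j = c then x j else 0)) := by
    intro j
    by_cases h1 : j = a <;> by_cases h2 : j = b <;> by_cases h3 : j = c <;>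
      simp_all [h]
  rw [Finset.sum_congr rfl (fun j _ => hpt j), Finset.sum_add_distrib, Finset.sum_add_distrib]
  simp [add_assoc]

lemma dynkin_row (x : Fin n → ZMod 2) (i : Fin n) :
    (dynkinAdj (ZMod 2) n *ᵥ x) i
      = ∑ j : Fin n, (if (((i.val + 1 = j.val ∧ 1 ≤ i.val) ∨ (j.val + 1 = i.val ∧ 1 ≤ j.val))
          ∨ (i.val = 0 ∧ j.val = 2) ∨ (j.val = 0 ∧ i.val = 2)) then x j else 0) := by
  simp [dynkinAdj, mulVec, dotProduct, ite_mul]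

lemma row0 (hn : 4 ≤ n) (x : Fin n → ZMod 2) (i : Fin n) (hi : i.val = 0) :
    (dynkinAdj (ZMod 2) n *ᵥ x) i = x ⟨2, by omega⟩ := by
  rw [dynkin_row]
  apply sum_ite_single
  intro j
  simp only [Fin.ext_iff]
  omega

lemma row1 (hn : 4 ≤ n) (x : Fin n → ZMod 2) (i : Fin n) (hi : i.val = 1) :
    (dynkinAdj (ZMod 2) n *ᵥ x) i = x ⟨2, by omega⟩ := by
  rw [dynkin_row]
  apply sum_ite_single
  intro j
  simp only [Fin.ext_iff]
  omega

lemma row2 (hn : 4 ≤ n) (x : Fin n → ZMod 2) (i : Fin n) (hi : i.val = 2) :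
    (dynkinAdj (ZMod 2) n *ᵥ x) i
      = x ⟨0, by omega⟩ + x ⟨1, by omega⟩ + x ⟨3, by omega⟩ := by
  rw [dynkin_row]
  apply sum_ite_triple
  · simp only [ne_eq, Fin.mk.injEq]; omega
  · simp only [ne_eq, Fin.mk.injEq]; omega
  · simp only [ne_eq, Fin.mk.injEq]; omega
  · intro j
    simp only [Fin.ext_iff]
    omega

lemma rowMid (x : Fin n → ZMod 2) (i : Fin n) (h3 : 3 ≤ i.val) (hlt : i.val + 1 < n) :
    (dynkinAdj (ZMod 2) n *ᵥ x) i
      = x ⟨i.val - 1, by omega⟩ + x ⟨i.val + 1, by omega⟩ := by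
  rw [dynkin_row]
  apply sum_ite_pair
  · simp only [ne_eq, Fin.mk.injEq]; omega
  · intro j
    simp only [Fin.ext_iff]
    omega

lemma rowLast (hn : 4 ≤ n) (x : Fin n → ZMod 2) (i : Fin n) (hi : i.val = n - 1) :
    (dynkinAdj (ZMod 2) n *ᵥ x) i = x ⟨n - 2, by omega⟩ := by
  rw [dynkin_row]
  apply sum_ite_single
  intro j
  simp only [Fin.ext_iff]
  have := i.isLt
  have := j.isLt
  omega

lemma dynkin_symm : (dynkinAdj (ZMod 2) n)ᵀ = dynkinAdj (ZMod 2) n := by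
  ext i j
  simp only [transpose_apply, dynkinAdj, Matrix.of_apply]
  refine if_congr ?_ rfl rfl
  tauto

lemma ker_k1 (hn : 4 ≤ n) (h4 : n % 4 = 0) : dynkinAdj (ZMod 2) n *ᵥ k1v n = 0 := by
  have gen : ∀ x : ZMod 2, (x + 0 + 0) + (x + 0 + 0) = 0 := by decide
  funext i
  rcases Nat.lt_or_ge i.val 3 with h3 | h3
  · interval_cases h : i.val
    · rw [row0 hn _ i h]
      show k1v n ⟨2, by omega⟩ = 0
      rw [k1v_apply]
      decide
    · rw [row1 hn _ i h]
      show k1v n ⟨2, by omega⟩ = 0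
      rw [k1v_apply]
      decide
    · rw [row2 hn _ i h]
      show k1v n ⟨0, by omega⟩ + k1v n ⟨1, by omega⟩ + k1v n ⟨3, by omega⟩ = 0
      rw [k1v_apply, k1v_apply, k1v_apply]
      decide
  · rcases Nat.lt_or_ge (i.val + 1) n with hlt | hge
    · rw [rowMid _ i h3 hlt]
      show k1v n ⟨i.val - 1, by omega⟩ + k1v n ⟨i.val + 1, by omega⟩ = 0
      rw [k1v_apply, k1v_apply,
        if_neg (show ¬(i.val - 1 = 0) by omega), if_neg (show ¬(i.val - 1 = 1) by omega),
        if_neg (show ¬(i.val + 1 = 0) by omega), if_neg (show ¬(i.val + 1 = 1) by omega),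
        show (i.val - 1) % 2 = (i.val + 1) % 2 by omega]
      exact gen _
    · have hi : i.val = n - 1 := by have := i.isLt; omega
      rw [rowLast hn _ i hi]
      show k1v n ⟨n - 2, by omega⟩ = 0
      rw [k1v_apply, if_neg (show ¬((n - 2) % 2 = 1) by omega),
        if_neg (show ¬(n - 2 = 0) by omega), if_neg (show ¬(n - 2 = 1) by omega)]
      decide

lemma ker_k2 (hn : 4 ≤ n) (h4 : n % 4 = 0) : dynkinAdj (ZMod 2) n *ᵥ k2v n = 0 := by
  have gen : ∀ x : ZMod 2, x + x = 0 := by decide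
  funext i
  rcases Nat.lt_or_ge i.val 3 with h3 | h3
  · interval_cases h : i.val
    · rw [row0 hn _ i h]
      show k2v n ⟨2, by omega⟩ = 0
      rw [k2v_apply]
      decide
    · rw [row1 hn _ i h]
      show k2v n ⟨2, by omega⟩ = 0
      rw [k2v_apply]
      decide
    · rw [row2 hn _ i h]
      show k2v n ⟨0, by omega⟩ + k2v n ⟨1, by omega⟩ + k2v n ⟨3, by omega⟩ = 0
      rw [k2v_apply, k2v_apply, k2v_apply]
      decide
  · rcases Nat.lt_or_ge (i.val + 1) n with hlt | hge
    · rw [rowMid _ i h3 hlt]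
      show k2v n ⟨i.val - 1, by omega⟩ + k2v n ⟨i.val + 1, by omega⟩ = 0
      rw [k2v_apply, k2v_apply, show (i.val - 1) % 2 = (i.val + 1) % 2 by omega]
      exact gen _
    · have hi : i.val = n - 1 := by have := i.isLt; omega
      rw [rowLast hn _ i hi]
      show k2v n ⟨n - 2, by omega⟩ = 0
      rw [k2v_apply, if_neg (show ¬((n - 2) % 2 = 1) by omega)]

lemma sum_parity (n : ℕ) :
    (∑ j ∈ Finset.range n, if j % 2 = 1 then (1 : ZMod 2) else 0) = ((n / 2 : ℕ) : ZMod 2) := by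
  induction n with
  | zero => simp
  | succ m ih =>
    rw [Finset.sum_range_succ, ih]
    by_cases h1 : m % 2 = 1
    · have h2 : (m + 1) / 2 = m / 2 + 1 := by omega
      rw [if_pos h1, h2]
      push_cast
      ring
    · have h2 : (m + 1) / 2 = m / 2 := by omega
      rw [if_neg h1, h2, add_zero]

lemma sum_parity_fin (h4 : n % 4 = 0) :
    (∑ j : Fin n, if j.val % 2 = 1 then (1 : ZMod 2) else 0) = 0 := by
  rw [Fin.sum_univ_eq_sum_range (fun j => if j % 2 = 1 then (1 : ZMod 2) else 0) n, sum_parity]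
  rw [ZMod.natCast_eq_zero_iff]
  omega

lemma sum_single0 (hn : 4 ≤ n) :
    (∑ j : Fin n, if j.val = 0 then (1 : ZMod 2) else 0) = 1 := by
  have := sum_ite_single (n := n) ⟨0, by omega⟩ (fun _ => 1) (fun j => j.val = 0)
    (by intro j; simp only [Fin.ext_iff])
  simpa using this

lemma sum_single1 (hn : 4 ≤ n) :
    (∑ j : Fin n, if j.val = 1 then (1 : ZMod 2) else 0) = 1 := by
  have := sum_ite_single (n := n) ⟨1, by omega⟩ (fun _ => 1) (fun j => j.val = 1)
    (by intro j; simp only [Fin.ext_iff])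
  simpa using this

lemma sum_k1 (hn : 4 ≤ n) (h4 : n % 4 = 0) : (∑ i : Fin n, k1v n i) = 0 := by
  simp only [k1v]
  rw [Finset.sum_add_distrib, Finset.sum_add_distrib, sum_parity_fin h4, sum_single0 hn,
    sum_single1 hn]
  decide

lemma sum_k2 (hn : 4 ≤ n) (h4 : n % 4 = 0) : (∑ i : Fin n, k2v n i) = 0 := by
  simp only [k2v]
  exact sum_parity_fin h4

lemma sum_k1_mul_k2 (hn : 4 ≤ n) (h4 : n % 4 = 0) :
    (∑ i : Fin n, k1v n i * k2v n i) = 1 := by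
  have hpt : ∀ i : Fin n, k1v n i * k2v n i
      = (if i.val % 2 = 1 then (1 : ZMod 2) else 0) + (if i.val = 1 then 1 else 0) := by
    intro i
    simp only [k1v, k2v]
    split_ifs <;> first | decide | omega
  rw [Finset.sum_congr rfl (fun i _ => hpt i), Finset.sum_add_distrib, sum_parity_fin h4,
    sum_single1 hn]
  decide

lemma dot_pow_zero (y : Fin n → ZMod 2) (hy : dynkinAdj (ZMod 2) n *ᵥ y = 0)
    (hye : (∑ i : Fin n, y i) = 0) (t : ℕ) :
    y ⬝ᵥ ((dynkinAdj (ZMod 2) n) ^ t *ᵥ (fun _ => (1 : ZMod 2))) = 0 := by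
  cases t with
  | zero =>
    simpa [dotProduct] using hye
  | succ s =>
    rw [pow_succ', ← mulVec_mulVec, dotProduct_mulVec, ← dynkin_symm, vecMul_transpose,
      dynkin_symm, hy, zero_dotProduct]

end Stmt10Aux

open Stmt10Aux in
theorem stmt10 (n : ℕ) (hn : 4 ≤ n) (h4 : n % 4 = 0) :
    LinearMap.range (Matrix.mulVecLin (walkMatrix (dynkinAdj (ZMod 2) n)))
        ⊓ LinearMap.ker (Matrix.mulVecLin (dynkinAdj (ZMod 2) n)) = ⊥ := by
  have c2 : ∀ x y z : ZMod 2, x + y + z = 0 → z = x + y := by decide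
  have c2' : ∀ x y : ZMod 2, x + y = 0 → y = x := by decide
  have gen0 : ∀ x y : ZMod 2, x * (0 + 1 + 0) + y * 0 = x := by decide
  have gen1 : ∀ x y : ZMod 2, x * (1 + 0 + 1) + y * 1 = y := by decide
  have gen2 : ∀ x y : ZMod 2, x * (0 + 0 + 0) + y * 0 = 0 := by decide
  have gen3 : ∀ x y : ZMod 2, x * (1 + 0 + 0) + y * 1 = x + y := by decide
  have sq : ∀ x : ZMod 2, x * x = x := by decide
  rw [eq_bot_iff]
  intro v hv
  rw [Submodule.mem_inf] at hv
  obtain ⟨hvr, hvk⟩ := hv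
  obtain ⟨c, hc⟩ := hvr
  rw [mulVecLin_apply] at hc
  rw [LinearMap.mem_ker, mulVecLin_apply] at hvk
  set a := v ⟨0, by omega⟩ with ha
  set b := v ⟨1, by omega⟩ with hb
  -- structure of kernel vectors: v = a • k1v + b • k2v
  have hstruct : ∀ m, ∀ hm : m < n, v ⟨m, hm⟩ = a * k1v n ⟨m, hm⟩ + b * k2v n ⟨m, hm⟩ := by
    intro m
    induction m using Nat.strong_induction_on with
    | _ m ih =>
      intro hm
      match m, hm with
      | 0, hm =>
        rw [k1v_apply, k2v_apply]
        norm_num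
        rfl
      | 1, hm =>
        rw [k1v_apply, k2v_apply, if_pos (show 1 % 2 = 1 from rfl),
          if_neg (show ¬(1 = 0) by omega)]
        exact (gen1 a b).symm
      | 2, hm =>
        have h := congrFun hvk ⟨0, by omega⟩
        rw [row0 hn v ⟨0, by omega⟩ rfl] at h
        rw [k1v_apply, k2v_apply]
        norm_num
        exact h
      | 3, hm =>
        have h := congrFun hvk ⟨2, by omega⟩
        rw [row2 hn v ⟨2, by omega⟩ rfl] at h
        rw [k1v_apply, k2v_apply]
        norm_num
        exact c2 _ _ _ h
      | (m + 4), hm =>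
        have h := congrFun hvk ⟨m + 3, by omega⟩
        rw [rowMid v ⟨m + 3, by omega⟩ (show 3 ≤ m + 3 by omega)
          (show m + 3 + 1 < n by omega)] at h
        have hv1 : v ⟨m + 4, hm⟩ = v ⟨m + 2, by omega⟩ := c2' _ _ h
        have hv2 := ih (m + 2) (by omega) (by omega)
        have e1 : k1v n ⟨m + 2, by omega⟩ = k1v n ⟨m + 4, hm⟩ := by
          rw [k1v_apply, k1v_apply,
            if_neg (show ¬(m + 2 = 0) by omega), if_neg (show ¬(m + 2 = 1) by omega),
            if_neg (show ¬(m + 4 = 0) by omega), if_neg (show ¬(m + 4 = 1) by omega),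
            show (m + 2) % 2 = (m + 4) % 2 by omega]
        have e2 : k2v n ⟨m + 2, by omega⟩ = k2v n ⟨m + 4, hm⟩ := by
          rw [k2v_apply, k2v_apply, show (m + 2) % 2 = (m + 4) % 2 by omega]
        rw [hv1, hv2, e1, e2]
  -- vectors in the kernel which are orthogonal to e annihilate the range of W
  have hdot : ∀ y : Fin n → ZMod 2, dynkinAdj (ZMod 2) n *ᵥ y = 0 →
      (∑ i : Fin n, y i) = 0 → y ⬝ᵥ v = 0 := by
    intro y hy hye
    rw [← hc, dotProduct_mulVec]
    have hyW : y ᵥ* walkMatrix (dynkinAdj (ZMod 2) n) = 0 := by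
      funext k
      have heq : (y ᵥ* walkMatrix (dynkinAdj (ZMod 2) n)) k
          = y ⬝ᵥ ((dynkinAdj (ZMod 2) n) ^ (k : ℕ) *ᵥ (fun _ => (1 : ZMod 2))) := rfl
      rw [heq, dot_pow_zero y hy hye, Pi.zero_apply]
    rw [hyW, zero_dotProduct]
  have hd1 : k1v n ⬝ᵥ v = 0 := hdot _ (ker_k1 hn h4) (sum_k1 hn h4)
  have hd2 : k2v n ⬝ᵥ v = 0 := hdot _ (ker_k2 hn h4) (sum_k2 hn h4)
  -- compute the two dot products using the structure of v
  have hk1v : k1v n ⬝ᵥ v = b := by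
    have hpt : ∀ i : Fin n, k1v n i * v i
        = a * (k1v n i) + b * (k1v n i * k2v n i) := by
      intro i
      have hei : (⟨i.val, i.isLt⟩ : Fin n) = i := rfl
      rw [show v i = a * k1v n ⟨i.val, i.isLt⟩ + b * k2v n ⟨i.val, i.isLt⟩ from
        hstruct i.val i.isLt, hei, mul_add,
        show k1v n i * (a * k1v n i) = a * (k1v n i * k1v n i) by ring, sq]
      ring
    rw [dotProduct, Finset.sum_congr rfl (fun i _ => hpt i), Finset.sum_add_distrib,
      ← Finset.mul_sum, ← Finset.mul_sum, sum_k1 hn h4, sum_k1_mul_k2 hn h4]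
    ring
  have hk2v : k2v n ⬝ᵥ v = a := by
    have hpt : ∀ i : Fin n, k2v n i * v i
        = a * (k1v n i * k2v n i) + b * (k2v n i) := by
      intro i
      have hei : (⟨i.val, i.isLt⟩ : Fin n) = i := rfl
      rw [show v i = a * k1v n ⟨i.val, i.isLt⟩ + b * k2v n ⟨i.val, i.isLt⟩ from
        hstruct i.val i.isLt, hei, mul_add,
        show k2v n i * (b * k2v n i) = b * (k2v n i * k2v n i) by ring, sq]
      ring
    rw [dotProduct, Finset.sum_congr rfl (fun i _ => hpt i), Finset.sum_add_distrib,
      ← Finset.mul_sum, ← Finset.mul_sum, sum_k2 hn h4, sum_k1_mul_k2 hn h4]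
    ring
  have hb0 : b = 0 := by rw [← hk1v, hd1]
  have ha0 : a = 0 := by rw [← hk2v, hd2]
  have hv0 : v = 0 := by
    funext i
    have h := hstruct i.val i.isLt
    rw [ha0, hb0] at h
    simpa using h
  rw [hv0]
  exact Submodule.zero_mem ⊥
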